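/- Closed form for the sparse-group prox: fix v ∈ ℝ, Ũ ∈ ℝ^K, α ≥ 0, λ̄ ≥ 0, β ≥ 0. The unique minimizer of (b, w̃) ↦ (1/2)(b - v)² + (1/2)‖w̃ - Ũ‖² + α|b| + λ̄‖w̃‖₁ + β‖(b, w̃)‖₂ is (b*, w̃*) = κ·(b̃, w̃₀) where b̃ = S_α(v) (soft-threshold), w̃₀ = S_λ̄(Ũ) (coordinatewise soft-threshold), r = √(b̃² + ‖w̃₀‖²), and κ = max(1 - β/r, 0) (with κ = 0 if r = 0). -/

import Mathlib

noncomputable def softThresh (τ u : ℝ) : ℝ := Real.sign u * max (|u| - τ) 0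

lemma softThresh_strong (τ z x : ℝ) (hτ : 0 ≤ τ) :
    (1/2)*(softThresh τ z - z)^2 + τ*|softThresh τ z| + (1/2)*(x - softThresh τ z)^2
      ≤ (1/2)*(x - z)^2 + τ*|x| := by
  unfold softThresh
  rcases lt_trichotomy z 0 with hz | hz | hz
  · rw [Real.sign_of_neg hz, abs_of_neg hz]
    rcases le_or_gt (-z) τ with h | h
    · rw [max_eq_right (by linarith)]
      simp only [mul_zero, abs_zero, zero_sub, sub_zero]
      rcases abs_cases x with ⟨ha, _⟩ | ⟨ha, _⟩ <;> rw [ha] <;> nlinarith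
    · rw [max_eq_left (by linarith)]
      have hy : (-1 : ℝ) * (-z - τ) = z + τ := by ring
      rw [hy, abs_of_neg (by linarith : z + τ < 0)]
      rcases abs_cases x with ⟨ha, _⟩ | ⟨ha, _⟩ <;> rw [ha] <;> nlinarith
  · subst hz
    simp only [Real.sign_zero, zero_mul, abs_zero, mul_zero, zero_sub, sub_zero]
    nlinarith [abs_nonneg x, sq_nonneg x]
  · rw [Real.sign_of_pos hz, abs_of_pos hz]
    rcases le_or_gt z τ with h | h
    · rw [max_eq_right (by linarith)]
      simp only [mul_zero, abs_zero, zero_sub, sub_zero]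
      rcases abs_cases x with ⟨ha, _⟩ | ⟨ha, _⟩ <;> rw [ha] <;> nlinarith
    · rw [max_eq_left (by linarith)]
      have hy : (1 : ℝ) * (z - τ) = z - τ := by ring
      rw [hy, abs_of_pos (by linarith : 0 < z - τ)]
      rcases abs_cases x with ⟨ha, _⟩ | ⟨ha, _⟩ <;> rw [ha] <;> nlinarith

lemma softThresh_scale (τ z κ : ℝ) (hτ : 0 ≤ τ) (hκ : 0 ≤ κ) :
    (1/2)*(κ*softThresh τ z - z)^2 + τ*|κ*softThresh τ z|
      = (1/2)*(softThresh τ z - z)^2 + τ*|softThresh τ z|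
        + (1/2)*(κ*softThresh τ z - softThresh τ z)^2 := by
  unfold softThresh
  rcases lt_trichotomy z 0 with hz | hz | hz
  · rw [Real.sign_of_neg hz, abs_of_neg hz]
    rcases le_or_gt (-z) τ with h | h
    · rw [max_eq_right (by linarith)]; simp
    · rw [max_eq_left (by linarith)]
      have hy : (-1 : ℝ) * (-z - τ) = z + τ := by ring
      rw [hy, abs_of_neg (by linarith : z + τ < 0),
        abs_of_nonpos (by nlinarith : κ * (z + τ) ≤ 0)]
      ring
  · simp [hz, Real.sign_zero]
  · rw [Real.sign_of_pos hz, abs_of_pos hz]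
    rcases le_or_gt z τ with h | h
    · rw [max_eq_right (by linarith)]; simp
    · rw [max_eq_left (by linarith)]
      have hy : (1 : ℝ) * (z - τ) = z - τ := by ring
      rw [hy, abs_of_pos (by linarith : 0 < z - τ),
        abs_of_nonneg (by nlinarith : 0 ≤ κ * (z - τ))]
      ring

lemma cs_pair (K : ℕ) (a b : ℝ) (f g : Fin K → ℝ) :
    a*b + ∑ i, f i * g i
      ≤ Real.sqrt (a^2 + ∑ i, f i^2) * Real.sqrt (b^2 + ∑ i, g i^2) := by
  have hsq : (a*b + ∑ i, f i * g i)^2 ≤ (a^2 + ∑ i, f i^2) * (b^2 + ∑ i, g i^2) := by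
    have h := Finset.sum_mul_sq_le_sq_mul_sq Finset.univ (Fin.cons a f) (Fin.cons b g)
    simpa [Fin.sum_univ_succ] using h
  calc a*b + ∑ i, f i * g i ≤ |a*b + ∑ i, f i * g i| := le_abs_self _
    _ = Real.sqrt ((a*b + ∑ i, f i * g i)^2) := (Real.sqrt_sq_eq_abs _).symm
    _ ≤ Real.sqrt ((a^2 + ∑ i, f i^2) * (b^2 + ∑ i, g i^2)) := Real.sqrt_le_sqrt hsq
    _ = Real.sqrt (a^2 + ∑ i, f i^2) * Real.sqrt (b^2 + ∑ i, g i^2) :=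
        Real.sqrt_mul (by positivity) _

lemma expand_sq (K : ℕ) (c d : ℝ) (f g : Fin K → ℝ) :
    (c - d)^2 + ∑ i, (f i - g i)^2
      = (c^2 + ∑ i, f i^2) - 2*(c*d + ∑ i, f i * g i) + (d^2 + ∑ i, g i^2) := by
  have h : ∀ i : Fin K, (f i - g i)^2 = f i^2 - 2*(f i * g i) + g i^2 := fun i => by ring
  rw [Finset.sum_congr rfl fun i _ => h i, Finset.sum_add_distrib, Finset.sum_sub_distrib,
    ← Finset.mul_sum]
  ring

lemma sgp_aux (K : ℕ) (v : ℝ) (U : Fin K → ℝ) (α lamBar β : ℝ)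
    (hα : 0 ≤ α) (hlam : 0 ≤ lamBar) (hβ : 0 ≤ β)
    (bt : ℝ) (wt : Fin K → ℝ) (r κ : ℝ)
    (hbt : bt = softThresh α v) (hwt : ∀ i, wt i = softThresh lamBar (U i))
    (hr : r = Real.sqrt (bt ^ 2 + ∑ i, (wt i) ^ 2))
    (hκ : κ = if r = 0 then 0 else max (1 - β / r) 0)
    (p : ℝ × (Fin K → ℝ)) (hp : p ≠ (κ * bt, fun i => κ * wt i)) :
    (1 / 2) * (κ * bt - v) ^ 2 + (1 / 2) * ∑ i, (κ * wt i - U i) ^ 2 +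
        α * |κ * bt| + lamBar * ∑ i, |κ * wt i| +
        β * Real.sqrt ((κ * bt) ^ 2 + ∑ i, (κ * wt i) ^ 2)
      < (1 / 2) * (p.1 - v) ^ 2 + (1 / 2) * ∑ i, (p.2 i - U i) ^ 2 +
        α * |p.1| + lamBar * ∑ i, |p.2 i| +
        β * Real.sqrt (p.1 ^ 2 + ∑ i, (p.2 i) ^ 2) := by
  have hκ0 : 0 ≤ κ := by
    rw [hκ]; split
    · exact le_rfl
    · exact le_max_right _ _
  set A := p.1^2 + ∑ i, (p.2 i)^2 with hAdef
  set B := bt^2 + ∑ i, (wt i)^2 with hBdef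
  set C := p.1*bt + ∑ i, p.2 i * wt i with hCdef
  have hApos : 0 ≤ A := by positivity
  have hBpos : 0 ≤ B := by positivity
  set nx := Real.sqrt A with hnxdef
  have hr2 : r^2 = B := by rw [hr]; exact Real.sq_sqrt hBpos
  have hnx2 : nx^2 = A := Real.sq_sqrt hApos
  have hr0 : 0 ≤ r := hr ▸ Real.sqrt_nonneg _
  have hnx0 : 0 ≤ nx := Real.sqrt_nonneg _
  have hCS : C ≤ nx * r := by
    rw [hCdef, hnxdef, hAdef, hr, hBdef]; exact cs_pair K p.1 bt p.2 wt
  have hBscale : (κ*bt)^2 + ∑ i, (κ*wt i)^2 = κ^2 * B := by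
    rw [hBdef, mul_add, Finset.mul_sum]
    congr 1
    · ring
    · exact Finset.sum_congr rfl fun i _ => by ring
  have hnormstar : Real.sqrt ((κ*bt)^2 + ∑ i, (κ*wt i)^2) = κ * r := by
    rw [hBscale, Real.sqrt_mul (sq_nonneg κ), Real.sqrt_sq hκ0, hr]
  have sκ2 : (κ*bt-bt)^2 + ∑ i, (κ*wt i - wt i)^2 = (κ-1)^2 * B := by
    rw [hBdef, mul_add, Finset.mul_sum]
    congr 1
    · ring
    · exact Finset.sum_congr rfl fun i _ => by ring
  have hCscale : p.1*(κ*bt) + ∑ i, p.2 i * (κ*wt i) = κ * C := by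
    rw [hCdef, mul_add, Finset.mul_sum]
    congr 1
    · ring
    · exact Finset.sum_congr rfl fun i _ => by ring
  have sD : (p.1 - κ*bt)^2 + ∑ i, (p.2 i - κ*wt i)^2 = A - 2*(κ*C) + κ^2*B := by
    rw [expand_sq K p.1 (κ*bt) p.2 (fun i => κ*wt i), hCscale, hBscale, ← hAdef]
  have sXY : (p.1 - bt)^2 + ∑ i, (p.2 i - wt i)^2 = A - 2*C + B := by
    rw [expand_sq K p.1 bt p.2 wt, ← hAdef, ← hBdef, ← hCdef]
  set D := (p.1 - κ*bt)^2 + ∑ i, (p.2 i - κ*wt i)^2 with hDdef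
  clear_value A B C nx D
  have hD : 0 < D := by
    rw [hDdef]
    have hsum0 : 0 ≤ ∑ i, (p.2 i - κ*wt i)^2 := Finset.sum_nonneg fun i _ => sq_nonneg _
    rcases eq_or_ne p.1 (κ*bt) with h1 | h1
    · have h2 : p.2 ≠ fun i => κ * wt i := fun h2 => hp (Prod.ext h1 h2)
      obtain ⟨i, hi⟩ : ∃ i, p.2 i ≠ κ * wt i := by
        by_contra hall; push_neg at hall; exact h2 (funext hall)
      have hpos : 0 < ∑ i, (p.2 i - κ*wt i)^2 :=
        Finset.sum_pos' (fun j _ => sq_nonneg _)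
          ⟨i, Finset.mem_univ i, sq_pos_of_ne_zero (sub_ne_zero.mpr hi)⟩
      have := sq_nonneg (p.1 - κ*bt)
      linarith
    · have hpos : 0 < (p.1 - κ*bt)^2 := sq_pos_of_ne_zero (sub_ne_zero.mpr h1)
      linarith
  have hKey : (1/2)*((κ*bt-bt)^2 + ∑ i, (κ*wt i - wt i)^2) + β*(κ*r) + (1/2)*D
      ≤ (1/2)*((p.1-bt)^2 + ∑ i, (p.2 i - wt i)^2) + β*nx := by
    rw [sκ2, sXY, sD]
    by_cases hrz : r = 0
    · have hκz : κ = 0 := by rw [hκ, if_pos hrz]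
      have hBz : B = 0 := by rw [← hr2, hrz]; ring
      have hCz : C ≤ 0 := by rw [hrz] at hCS; simpa using hCS
      rw [hκz, hBz]
      linarith [hCz, mul_nonneg hβ hnx0]
    · have hrpos : 0 < r := lt_of_le_of_ne hr0 (Ne.symm hrz)
      have hκdef : κ = max (1 - β / r) 0 := by rw [hκ, if_neg hrz]
      rcases le_or_gt r β with h | h
      · have hκz : κ = 0 := by
          rw [hκdef, max_eq_right]
          have : (1:ℝ) ≤ β / r := (one_le_div hrpos).mpr h
          linarith
        rw [hκz]
        linarith [hCS, mul_le_mul_of_nonneg_left h hnx0, mul_nonneg hβ hnx0,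
          mul_le_mul_of_nonneg_left (mul_le_mul_of_nonneg_left h hnx0) hβ]
      · have hκval : κ = 1 - β / r := by
          rw [hκdef, max_eq_left]
          have : β / r < 1 := (div_lt_one hrpos).mpr h
          linarith
        have hκr : κ * r = r - β := by
          rw [hκval]; field_simp
        have e1 : (κ-1)^2*B = β^2 := by
          rw [← hr2]
          calc (κ-1)^2*r^2 = (κ*r - r)^2 := by ring
            _ = β^2 := by rw [hκr]; ring
        have e2 : κ^2*B = (r-β)^2 := by
          rw [← hr2]
          calc κ^2*r^2 = (κ*r)^2 := by ring
            _ = (r-β)^2 := by rw [hκr]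
        have e3 : β*(κ*r) = β*(r-β) := by rw [hκr]
        have h4 : β*C ≤ β*(nx*r) := mul_le_mul_of_nonneg_left hCS hβ
        have h5 : (1-κ)*C ≤ β*nx := by
          rw [← mul_le_mul_iff_of_pos_right hrpos]
          calc (1-κ)*C*r = (r - κ*r)*C := by ring
            _ = β*C := by rw [hκr]; ring
            _ ≤ β*(nx*r) := h4
            _ = β*nx*r := by ring
        linarith [e1, e2, e3, h5, hr2]
  have hb1 : (1/2)*(κ*bt - v)^2 + α*|κ*bt|
      = (1/2)*(bt - v)^2 + α*|bt| + (1/2)*(κ*bt - bt)^2 := by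
    rw [hbt]; exact softThresh_scale α v κ hα hκ0
  have hb2s : ∑ i, ((1/2)*(κ*wt i - U i)^2 + lamBar*|κ*wt i|)
      = ∑ i, ((1/2)*(wt i - U i)^2 + lamBar*|wt i| + (1/2)*(κ*wt i - wt i)^2) :=
    Finset.sum_congr rfl fun i _ => by
      rw [hwt i]; exact softThresh_scale lamBar (U i) κ hlam hκ0
  have ha1 : (1/2)*(bt - v)^2 + α*|bt| + (1/2)*(p.1 - bt)^2
      ≤ (1/2)*(p.1 - v)^2 + α*|p.1| := by
    rw [hbt]; exact softThresh_strong α v p.1 hα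
  have ha2s : ∑ i, ((1/2)*(wt i - U i)^2 + lamBar*|wt i| + (1/2)*(p.2 i - wt i)^2)
      ≤ ∑ i, ((1/2)*(p.2 i - U i)^2 + lamBar*|p.2 i|) :=
    Finset.sum_le_sum fun i _ => by
      rw [hwt i]; exact softThresh_strong lamBar (U i) (p.2 i) hlam
  have split1 : ∀ (x : Fin K → ℝ) (y : Fin K → ℝ),
      ∑ i, ((1/2)*(x i)^2 + lamBar*(y i)) = (1/2)*∑ i, (x i)^2 + lamBar*∑ i, y i := by
    intro x y
    rw [Finset.sum_add_distrib, Finset.mul_sum, Finset.mul_sum]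
  have es1 : ∑ i, ((1/2)*(p.2 i - U i)^2 + lamBar*|p.2 i|)
      = (1/2)*∑ i, (p.2 i - U i)^2 + lamBar*∑ i, |p.2 i| :=
    split1 (fun i => p.2 i - U i) (fun i => |p.2 i|)
  have es2 : ∑ i, ((1/2)*(κ*wt i - U i)^2 + lamBar*|κ*wt i|)
      = (1/2)*∑ i, (κ*wt i - U i)^2 + lamBar*∑ i, |κ*wt i| :=
    split1 (fun i => κ*wt i - U i) (fun i => |κ*wt i|)
  have es3 : ∑ i, ((1/2)*(wt i - U i)^2 + lamBar*|wt i| + (1/2)*(p.2 i - wt i)^2)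
      = (1/2)*∑ i, (wt i - U i)^2 + lamBar*∑ i, |wt i| + (1/2)*∑ i, (p.2 i - wt i)^2 := by
    rw [Finset.sum_add_distrib, split1 (fun i => wt i - U i) (fun i => |wt i|),
      ← Finset.mul_sum]
  have es4 : ∑ i, ((1/2)*(wt i - U i)^2 + lamBar*|wt i| + (1/2)*(κ*wt i - wt i)^2)
      = (1/2)*∑ i, (wt i - U i)^2 + lamBar*∑ i, |wt i| + (1/2)*∑ i, (κ*wt i - wt i)^2 := by
    rw [Finset.sum_add_distrib, split1 (fun i => wt i - U i) (fun i => |wt i|),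
      ← Finset.mul_sum]
  rw [es1] at ha2s
  rw [es3] at ha2s
  rw [es2, es4] at hb2s
  rw [hnormstar]
  linarith [hD, hKey, ha1, ha2s, hb1, hb2s]

theorem sparse_group_prox_closed_form (K : ℕ) (v : ℝ) (U : Fin K → ℝ)
    (α lamBar β : ℝ) (hα : 0 ≤ α) (hlam : 0 ≤ lamBar) (hβ : 0 ≤ β) :
    let F : ℝ × (Fin K → ℝ) → ℝ := fun p =>
      (1 / 2) * (p.1 - v) ^ 2 + (1 / 2) * ∑ i, (p.2 i - U i) ^ 2 +
        α * |p.1| + lamBar * ∑ i, |p.2 i| +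
        β * Real.sqrt (p.1 ^ 2 + ∑ i, (p.2 i) ^ 2)
    let bt : ℝ := softThresh α v
    let wt : Fin K → ℝ := fun i => softThresh lamBar (U i)
    let r : ℝ := Real.sqrt (bt ^ 2 + ∑ i, (wt i) ^ 2)
    let κ : ℝ := if r = 0 then 0 else max (1 - β / r) 0
    ∀ p : ℝ × (Fin K → ℝ), p ≠ (κ * bt, fun i => κ * wt i) →
      F (κ * bt, fun i => κ * wt i) < F p := by
  intro F bt wt r κ p hp
  exact sgp_aux K v U α lamBar β hα hlam hβ bt wt r κ rfl (fun i => rfl) rfl rfl p hp
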